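/- arXiv:2012.10134 — 4 statements merged into one kernel-verified Lean document; each statement's English description precedes it below -/
import Mathlib

section
/- Let U be an affine unital of order n with parallelism π. The π-closure U^π, obtained by adding one new point per parallel class incident with all short blocks of that class, and one new block incident with the n+1 new points, is a unital of order n, i.e., a 2-(n^3+1, n+1, 1) design. -/
/-- The π-closure of an affine unital of order `n` — obtained by adding one new
point per parallel class (incident with all short blocks of that class) and one
new block incident with the `n+1` new points — is a unital of order `n`,
i.e. a 2-(n³+1, n+1, 1) design. -/
theorem affine_unital_closure_is_unital (n : ℕ) (hn : 2 ≤ n)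
    (P : Type) [Fintype P] [DecidableEq P] (B : Finset (Finset P))
    -- (AU1)
    (hpoints : Fintype.card P = n ^ 3 - n)
    -- (AU2)
    (hblock : ∀ b ∈ B, b.card = n ∨ b.card = n + 1)
    -- (AU3)
    (hdeg : ∀ p : P, (B.filter (fun b => p ∈ b)).card = n ^ 2)
    -- (AU4)
    (hjoin : ∀ x y : P, x ≠ y → ∃! b, b ∈ B ∧ x ∈ b ∧ y ∈ b)
    -- (AU5) the parallelism π on the short blocks
    (π : Finset P → Fin (n + 1))
    (hπsize : ∀ i : Fin (n + 1),
      (B.filter (fun b => b.card = n ∧ π b = i)).card = n ^ 2 - 1)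
    (hπdisj : ∀ b₁ ∈ B, ∀ b₂ ∈ B, b₁.card = n → b₂.card = n → π b₁ = π b₂ →
      b₁ ≠ b₂ → Disjoint b₁ b₂) :
    -- the π-closure: new points `Sum.inr i`, short blocks extended by the new
    -- point of their parallel class, plus the block at infinity
    ∀ B' : Finset (Finset (P ⊕ Fin (n + 1))),
      B' = (B.image fun b =>
              if b.card = n then insert (Sum.inr (π b)) (b.image Sum.inl)
              else b.image Sum.inl)
            ∪ {(Finset.univ : Finset (Fin (n + 1))).image Sum.inr} →
      (Fintype.card (P ⊕ Fin (n + 1)) = n ^ 3 + 1 ∧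
       (∀ b ∈ B', b.card = n + 1) ∧
       (∀ x y : P ⊕ Fin (n + 1), x ≠ y → ∃! b, b ∈ B' ∧ x ∈ b ∧ y ∈ b)) := by
  intro B' hB'
  have hn1 : 1 ≤ n := le_trans (by norm_num) hn
  have hnn3 : n ≤ n ^ 3 := Nat.le_self_pow (by norm_num) n
  -- membership in B'
  have hmemB' : ∀ c : Finset (P ⊕ Fin (n + 1)), c ∈ B' ↔
      (∃ b ∈ B, (if b.card = n then insert (Sum.inr (π b)) (b.image Sum.inl)
        else b.image Sum.inl) = c) ∨
      c = (Finset.univ : Finset (Fin (n + 1))).image Sum.inr := by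
    intro c
    rw [hB']
    simp [Finset.mem_union, Finset.mem_image]
    exact or_comm
  -- membership of inl in an image block
  have hinl : ∀ (b : Finset P) (p : P),
      (Sum.inl p : P ⊕ Fin (n + 1)) ∈ (if b.card = n then insert (Sum.inr (π b)) (b.image Sum.inl)
        else b.image Sum.inl) ↔ p ∈ b := by
    intro b p
    split <;> simp
  have hinr : ∀ (b : Finset P) (i : Fin (n + 1)),
      (Sum.inr i : P ⊕ Fin (n + 1)) ∈ (if b.card = n then insert (Sum.inr (π b)) (b.image Sum.inl)
        else b.image Sum.inl) ↔ (b.card = n ∧ π b = i) := by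
    intro b i
    by_cases h : b.card = n
    · rw [if_pos h]; simp [h, eq_comm]
    · rw [if_neg h]; simp [h]
  -- each parallel class partitions the point set
  have hpart : ∀ (i : Fin (n + 1)) (p : P),
      ∃! b, b ∈ B ∧ b.card = n ∧ π b = i ∧ p ∈ b := by
    intro i p
    set S := B.filter (fun b => b.card = n ∧ π b = i) with hS
    have hdisjS : ∀ b₁ ∈ S, ∀ b₂ ∈ S, b₁ ≠ b₂ → Disjoint b₁ b₂ := by
      intro b₁ h1 b₂ h2 hne
      rw [hS, Finset.mem_filter] at h1 h2
      exact hπdisj b₁ h1.1 b₂ h2.1 h1.2.1 h2.2.1 (h1.2.2.trans h2.2.2.symm) hne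
    have hcard : (S.biUnion (fun b => b)).card = n ^ 3 - n := by
      rw [Finset.card_biUnion hdisjS]
      have hsum : ∑ b ∈ S, b.card = ∑ b ∈ S, n := by
        refine Finset.sum_congr rfl ?_
        intro b hb
        rw [hS, Finset.mem_filter] at hb
        exact hb.2.1
      rw [hsum, Finset.sum_const, smul_eq_mul, hπsize i, Nat.sub_mul, one_mul]
      have : n ^ 2 * n = n ^ 3 := by ring
      rw [this]
    have huniv : S.biUnion (fun b => b) = Finset.univ := by
      apply Finset.eq_univ_of_card
      rw [hcard, hpoints]
    have hpmem : p ∈ S.biUnion (fun b => b) := huniv ▸ Finset.mem_univ p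
    rw [Finset.mem_biUnion] at hpmem
    obtain ⟨b, hbS, hpb⟩ := hpmem
    rw [hS, Finset.mem_filter] at hbS
    refine ⟨b, ⟨hbS.1, hbS.2.1, hbS.2.2, hpb⟩, ?_⟩
    intro b' ⟨hb'B, hb'n, hb'i, hpb'⟩
    by_contra hne
    have hd := hπdisj b' hb'B b hbS.1 hb'n hbS.2.1 (hb'i.trans hbS.2.2.symm) hne
    exact Finset.disjoint_left.mp hd hpb' hpb
  refine ⟨?_, ?_, ?_⟩
  · -- point count
    rw [Fintype.card_sum, hpoints, Fintype.card_fin]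
    omega
  · -- block sizes
    intro c hc
    rcases (hmemB' c).mp hc with ⟨b, hbB, rfl⟩ | rfl
    · by_cases h : b.card = n
      · rw [if_pos h]
        rw [Finset.card_insert_of_notMem (by simp),
          Finset.card_image_of_injective _ Sum.inl_injective, h]
      · rcases hblock b hbB with h' | h'
        · exact absurd h' h
        · rw [if_neg h, Finset.card_image_of_injective _ Sum.inl_injective, h']
    · rw [Finset.card_image_of_injective _ Sum.inr_injective, Finset.card_univ,
        Fintype.card_fin]
  · -- joining
    intro x y hxy
    rcases x with p | i <;> rcases y with q | j
    · -- two old points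
      have hpq : p ≠ q := fun h => hxy (by rw [h])
      obtain ⟨b, ⟨hbB, hpb, hqb⟩, hu⟩ := hjoin p q hpq
      refine ⟨(if b.card = n then insert (Sum.inr (π b)) (b.image Sum.inl)
        else b.image Sum.inl), ⟨(hmemB' _).mpr (Or.inl ⟨b, hbB, rfl⟩),
        (hinl b p).mpr hpb, (hinl b q).mpr hqb⟩, ?_⟩
      rintro c ⟨hc, hxc, hyc⟩
      rcases (hmemB' c).mp hc with ⟨b', hb'B, rfl⟩ | rfl
      · have : b' = b := hu b' ⟨hb'B, (hinl b' p).mp hxc, (hinl b' q).mp hyc⟩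
        rw [this]
      · simp at hxc
    · -- old point and new point
      obtain ⟨b, ⟨hbB, hbn, hbj, hpb⟩, hu⟩ := hpart j p
      refine ⟨(if b.card = n then insert (Sum.inr (π b)) (b.image Sum.inl)
        else b.image Sum.inl), ⟨(hmemB' _).mpr (Or.inl ⟨b, hbB, rfl⟩),
        (hinl b p).mpr hpb, (hinr b j).mpr ⟨hbn, hbj⟩⟩, ?_⟩
      rintro c ⟨hc, hxc, hyc⟩
      rcases (hmemB' c).mp hc with ⟨b', hb'B, rfl⟩ | rfl
      · obtain ⟨hb'n, hb'j⟩ := (hinr b' j).mp hyc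
        have : b' = b := hu b' ⟨hb'B, hb'n, hb'j, (hinl b' p).mp hxc⟩
        rw [this]
      · simp at hxc
    · -- new point and old point
      obtain ⟨b, ⟨hbB, hbn, hbi, hqb⟩, hu⟩ := hpart i q
      refine ⟨(if b.card = n then insert (Sum.inr (π b)) (b.image Sum.inl)
        else b.image Sum.inl), ⟨(hmemB' _).mpr (Or.inl ⟨b, hbB, rfl⟩),
        (hinr b i).mpr ⟨hbn, hbi⟩, (hinl b q).mpr hqb⟩, ?_⟩
      rintro c ⟨hc, hxc, hyc⟩
      rcases (hmemB' c).mp hc with ⟨b', hb'B, rfl⟩ | rfl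
      · obtain ⟨hb'n, hb'i⟩ := (hinr b' i).mp hxc
        have : b' = b := hu b' ⟨hb'B, hb'n, hb'i, (hinl b' q).mp hyc⟩
        rw [this]
      · simp at hyc
    · -- two new points
      have hij : i ≠ j := fun h => hxy (by rw [h])
      refine ⟨(Finset.univ : Finset (Fin (n + 1))).image Sum.inr,
        ⟨(hmemB' _).mpr (Or.inr rfl), by simp, by simp⟩, ?_⟩
      rintro c ⟨hc, hxc, hyc⟩
      rcases (hmemB' c).mp hc with ⟨b', hb'B, rfl⟩ | rfl
      · obtain ⟨_, hb'i⟩ := (hinr b' i).mp hxc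
        obtain ⟨_, hb'j⟩ := (hinr b' j).mp hyc
        exact absurd (hb'i.symm.trans hb'j) hij
      · rfl
end

section
/- Any two distinct Sylow p-subgroups of SL(2,q) intersect trivially, where q is a power of the prime p. -/
open Matrix MulAction

variable {F : Type} [Field F] [Fintype F] [DecidableEq F]

instance sl2VecAction : MulAction (Matrix.SpecialLinearGroup (Fin 2) F) (Fin 2 → F) where
  smul g v := g.1.mulVec v
  one_smul v := by
    show (1 : Matrix.SpecialLinearGroup (Fin 2) F).1.mulVec v = v
    simp
  mul_smul g h v := by
    show ((g * h : Matrix.SpecialLinearGroup (Fin 2) F)).1.mulVec v = g.1.mulVec (h.1.mulVec v)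
    simp [Matrix.SpecialLinearGroup.coe_mul, ← Matrix.mulVec_mulVec]

theorem sl2_smul_def (g : Matrix.SpecialLinearGroup (Fin 2) F) (v : Fin 2 → F) :
    g • v = g.1.mulVec v := rfl

/-- the stabilizer of `![1,0]` is in bijection with `F`. -/
noncomputable def stabE1Equiv :
    F ≃ MulAction.stabilizer (Matrix.SpecialLinearGroup (Fin 2) F) (![1, 0] : Fin 2 → F) where
  toFun b := ⟨⟨!![1, b; 0, 1], by simp [Matrix.det_fin_two]⟩, by
    show Matrix.mulVec !![1, b; 0, 1] ![1, 0] = ![1, 0]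
    funext i; fin_cases i <;> simp [Matrix.mulVec, dotProduct, Fin.sum_univ_two]⟩
  invFun g := g.1.1 0 1
  left_inv b := by simp
  right_inv g := by
    obtain ⟨⟨M, hdet⟩, hg⟩ := g
    have hv : Matrix.mulVec M ![1, 0] = ![1, 0] := hg
    have h00 : M 0 0 = 1 := by
      have := congrFun hv 0
      simpa [Matrix.mulVec, dotProduct, Fin.sum_univ_two] using this
    have h10 : M 1 0 = 0 := by
      have := congrFun hv 1
      simpa [Matrix.mulVec, dotProduct, Fin.sum_univ_two] using this
    have h11 : M 1 1 = 1 := by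
      rw [Matrix.det_fin_two, h00, h10] at hdet
      simpa using hdet
    ext i j
    fin_cases i <;> fin_cases j <;> simp [h00, h10, h11]

theorem card_stab_e1 :
    Nat.card (MulAction.stabilizer (Matrix.SpecialLinearGroup (Fin 2) F) (![1, 0] : Fin 2 → F))
      = Fintype.card F := by
  rw [Nat.card_congr stabE1Equiv.symm, Nat.card_eq_fintype_card]

theorem exists_sl2_smul_e1 (v : Fin 2 → F) (hv : v ≠ 0) :
    ∃ A : Matrix.SpecialLinearGroup (Fin 2) F, A • (![1, 0] : Fin 2 → F) = v := by
  by_cases h0 : v 0 ≠ 0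
  · refine ⟨⟨!![v 0, 0; v 1, (v 0)⁻¹], by simp [Matrix.det_fin_two, mul_inv_cancel₀ h0]⟩, ?_⟩
    show Matrix.mulVec _ ![1, 0] = v
    funext i; fin_cases i <;> simp [Matrix.mulVec, dotProduct, Fin.sum_univ_two]
  · push_neg at h0
    have h1 : v 1 ≠ 0 := by
      intro h1
      apply hv; funext i; fin_cases i <;> simp [h0, h1]
    refine ⟨⟨!![0, -(v 1)⁻¹; v 1, 0], by
      simp [Matrix.det_fin_two, inv_mul_cancel₀ h1]⟩, ?_⟩
    show Matrix.mulVec _ ![1, 0] = v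
    funext i; fin_cases i <;> simp [Matrix.mulVec, dotProduct, Fin.sum_univ_two, h0]

theorem card_stab (v : Fin 2 → F) (hv : v ≠ 0) :
    Nat.card (MulAction.stabilizer (Matrix.SpecialLinearGroup (Fin 2) F) v)
      = Fintype.card F := by
  obtain ⟨A, hA⟩ := exists_sl2_smul_e1 v hv
  rw [← hA, MulAction.stabilizer_smul_eq_stabilizer_map_conj]
  rw [Nat.card_congr (Subgroup.equivMapOfInjective _ _ (MulAut.conj A).injective).symm.toEquiv]
  exact card_stab_e1

/-- every element fixing ![1,0]-type nonzero vectors... main mulVec=id lemma -/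
theorem sl2_eq_one_of_fix_basis (x : Matrix.SpecialLinearGroup (Fin 2) F)
    (v w : Fin 2 → F) (hli : LinearIndependent F ![v, w])
    (hxv : x • v = v) (hxw : x • w = w) : x = 1 := by
  have hcard : Fintype.card (Fin 2) = Module.finrank F (Fin 2 → F) := by simp
  let B := basisOfLinearIndependentOfCardEqFinrank hli hcard
  have hB : ⇑B = ![v, w] := coe_basisOfLinearIndependentOfCardEqFinrank hli hcard
  have hfix : ∀ u : Fin 2 → F, x.1.mulVec u = u := by
    intro u
    have hmap : x.1.mulVecLin = LinearMap.id := by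
      apply B.ext
      intro i
      rw [hB]
      fin_cases i
      · simpa [Matrix.mulVecLin_apply, sl2_smul_def] using hxv
      · simpa [Matrix.mulVecLin_apply, sl2_smul_def] using hxw
    have := congrArg (fun f => f u) (congrArg DFunLike.coe hmap)
    simpa [Matrix.mulVecLin_apply] using this
  ext i j
  have := congrFun (hfix (Pi.single j 1)) i
  rw [Matrix.mulVec_single] at this
  change x.1 i j * 1 = _ at this
  rw [mul_one] at this
  rw [this]
  by_cases h : i = j <;> simp [h, Matrix.one_apply, Pi.single_apply, eq_comm]

theorem sylow_eq_stab (p e : ℕ) [Fact p.Prime] (he : 0 < e)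
    (hF : Fintype.card F = p ^ e)
    (T : Sylow p (Matrix.SpecialLinearGroup (Fin 2) F)) :
    ∃ v : Fin 2 → F, v ≠ 0 ∧
      (T : Subgroup (Matrix.SpecialLinearGroup (Fin 2) F)) =
        MulAction.stabilizer (Matrix.SpecialLinearGroup (Fin 2) F) v := by
  have hT : IsPGroup p (T : Subgroup (Matrix.SpecialLinearGroup (Fin 2) F)) := T.2
  have hdvd : p ∣ Nat.card (Fin 2 → F) := by
    rw [Nat.card_eq_fintype_card, Fintype.card_fun, hF]
    exact dvd_pow (dvd_pow_self p he.ne') (by simp)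
  have h0 : (0 : Fin 2 → F) ∈ MulAction.fixedPoints
      (T : Subgroup (Matrix.SpecialLinearGroup (Fin 2) F)) (Fin 2 → F) := by
    intro g
    show g.1 • (0 : Fin 2 → F) = 0
    show g.1.1.mulVec 0 = 0
    simp
  obtain ⟨v, hvfix, hvne⟩ := hT.exists_fixed_point_of_prime_dvd_card_of_fixed_point
    (Fin 2 → F) hdvd h0
  refine ⟨v, fun h => hvne h.symm, ?_⟩
  have hle : (T : Subgroup (Matrix.SpecialLinearGroup (Fin 2) F)) ≤
      MulAction.stabilizer (Matrix.SpecialLinearGroup (Fin 2) F) v := by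
    intro g hg
    exact hvfix ⟨g, hg⟩
  have hstabP : IsPGroup p (MulAction.stabilizer (Matrix.SpecialLinearGroup (Fin 2) F) v) := by
    apply IsPGroup.of_card
    rw [card_stab v (fun h => hvne h.symm), hF]
  exact (T.3 hstabP hle).symm

/-- Any two distinct Sylow `p`-subgroups of `SL(2,q)` intersect trivially,
where `q = p^e` is a power of the prime `p`. -/
theorem sl2_sylow_trivial_intersection (p e : ℕ) (hp : p.Prime) [Fact p.Prime]
    (he : 0 < e) (F : Type) [Field F] [Fintype F] [DecidableEq F]
    (hF : Fintype.card F = p ^ e) :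
    ∀ T U : Sylow p (Matrix.SpecialLinearGroup (Fin 2) F), T ≠ U →
      (T : Subgroup (Matrix.SpecialLinearGroup (Fin 2) F)) ⊓
        (U : Subgroup (Matrix.SpecialLinearGroup (Fin 2) F)) = ⊥ := by
  intro T U hTU
  obtain ⟨v, hv, hTv⟩ := sylow_eq_stab p e he hF T
  obtain ⟨w, hw, hUw⟩ := sylow_eq_stab p e he hF U
  rw [Subgroup.eq_bot_iff_forall]
  intro x hx
  by_contra hx1
  obtain ⟨hxT, hxU⟩ := Subgroup.mem_inf.mp hx
  have hxv : x • v = v := by rw [hTv] at hxT; exact hxT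
  have hxw : x • w = w := by rw [hUw] at hxU; exact hxU
  by_cases hli : LinearIndependent F ![v, w]
  · exact hx1 (sl2_eq_one_of_fix_basis x v w hli hxv hxw)
  · rw [linearIndependent_fin2] at hli
    push_neg at hli
    simp only [Matrix.cons_val_one, Matrix.head_cons, Matrix.cons_val_zero] at hli
    obtain ⟨a, ha⟩ := hli hw
    have ha0 : a ≠ 0 := by rintro rfl; rw [zero_smul] at ha; exact hv ha.symm
    have hstab : MulAction.stabilizer (Matrix.SpecialLinearGroup (Fin 2) F) v =
        MulAction.stabilizer (Matrix.SpecialLinearGroup (Fin 2) F) w := by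
      ext g
      simp only [MulAction.mem_stabilizer_iff]
      rw [← ha]
      constructor
      · intro h
        have h2 : g.1.mulVec (a • w) = a • w := h
        rw [Matrix.mulVec_smul] at h2
        exact smul_right_injective (Fin 2 → F) ha0 h2
      · intro h
        show g.1.mulVec (a • w) = a • w
        rw [Matrix.mulVec_smul]
        rw [show g.1.mulVec w = w from h]
    apply hTU
    apply Sylow.ext
    rw [hTv, hUw, hstab]
end

section
/- Every subgroup of SL(2,8) of order 9 is cyclic. -/
set_option maxHeartbeats 1000000

open Matrix

local notation "F" => GaloisField 2 3
local notation "SL" => Matrix.SpecialLinearGroup (Fin 2) (GaloisField 2 3)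
local notation "M" => Matrix (Fin 2) (Fin 2) (GaloisField 2 3)

lemma F_pow_eight (a : F) : a ^ 8 = a := by
  classical
  haveI : Fintype F := Fintype.ofFinite F
  have h8 : Fintype.card F = 8 := by
    have := GaloisField.card 2 3 (by norm_num)
    rwa [Nat.card_eq_fintype_card] at this
  have := FiniteField.pow_card a
  rwa [h8] at this

lemma F_two (a : F) : a + a = 0 := by
  have h2 : (2 : F) = 0 := by exact_mod_cast CharP.cast_eq_zero F 2
  calc a + a = 2 * a := by ring
  _ = 0 := by rw [h2, zero_mul]

lemma cube_root_one (a : F) (h : a ^ 3 = 1) : a = 1 := by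
  have h8 := F_pow_eight a
  have h2 : a ^ 2 = a := by
    have : a ^ 8 = a ^ 2 := by
      calc a ^ 8 = (a ^ 3) ^ 2 * a ^ 2 := by ring
      _ = a ^ 2 := by rw [h]; ring
    rw [← this, h8]
  have h3 : a ^ 3 = a := by
    calc a ^ 3 = a ^ 2 * a := by ring
    _ = a * a := by rw [h2]
    _ = a ^ 2 := by ring
    _ = a := h2
  rw [h] at h3; exact h3.symm

lemma M_two (A : M) : A + A = 0 := by
  ext i j
  simp only [Matrix.add_apply, Matrix.zero_apply]
  exact F_two _

lemma ch2 (A : M) :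
    A * A = (Matrix.trace A) • A - (Matrix.det A) • (1 : M) := by
  ext i j
  fin_cases i <;> fin_cases j <;>
    simp [Matrix.mul_apply, Fin.sum_univ_succ, Matrix.trace, Matrix.det_fin_two, Matrix.one_apply]
  all_goals ring

lemma dich (A : M) (hdet : A.det = 1) (h3 : A ^ 3 = 1) : A = 1 ∨ A * A = A + 1 := by
  set t := Matrix.trace A with ht
  have h1 : A * A = t • A - (1 : M) := by rw [ch2 A, hdet, one_smul]
  by_cases htt : t = 1
  · right
    rw [h1, htt, one_smul]
    have hneg : -(1 : M) = 1 := neg_eq_of_add_eq_zero_left (M_two 1)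
    rw [sub_eq_add_neg, hneg]
  · left
    have hA3 : A ^ 3 = (t * t) • A - t • (1 : M) - A := by
      calc A ^ 3 = (A * A) * A := by rw [pow_succ, pow_two]
      _ = (t • A - 1) * A := by rw [h1]
      _ = t • (A * A) - A := by rw [sub_mul, smul_mul_assoc, one_mul]
      _ = t • (t • A - (1:M)) - A := by rw [h1]
      _ = (t * t) • A - t • (1 : M) - A := by rw [smul_sub, smul_smul]
    rw [h3] at hA3
    have e1 : (t * t) • A - A = 1 + t • (1 : M) := by
      linear_combination (norm := abel) -hA3
    set u := t - 1 with hu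
    have hu0 : u ≠ 0 := sub_ne_zero.mpr htt
    have huu : u * u = t * t - 1 := by
      rw [hu]; linear_combination F_two (1 - t)
    have h1t : (1 : F) + t = u := by
      rw [hu]; linear_combination F_two 1
    have key2 : (u * u) • A = u • (1 : M) := by
      calc (u * u) • A = (t * t - 1) • A := by rw [huu]
      _ = (t * t) • A - A := by rw [sub_smul, one_smul]
      _ = 1 + t • (1 : M) := e1
      _ = ((1 : F) + t) • (1 : M) := by rw [add_smul, one_smul]
      _ = u • (1 : M) := by rw [h1t]
    have hAsc : A = u⁻¹ • (1 : M) := by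
      have h5 := congrArg (fun B => (u⁻¹ * u⁻¹) • B) key2
      simp only [smul_smul] at h5
      rw [show u⁻¹ * u⁻¹ * (u * u) = (u⁻¹ * u) * (u⁻¹ * u) by ring,
        inv_mul_cancel₀ hu0, one_mul, one_smul] at h5
      rw [h5]
      congr 1
      field_simp
    have hc : (u⁻¹) ^ 3 • (1 : M) = 1 := by
      have h6 : (u⁻¹ • (1 : M)) ^ 3 = 1 := by rw [← hAsc, h3]
      rwa [smul_pow, one_pow] at h6
    have hc0 : (u⁻¹) ^ 3 = 1 := by
      have := congrArg (fun B : M => B 0 0) hc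
      simpa [Matrix.one_apply] using this
    have hone : u⁻¹ = 1 := cube_root_one _ hc0
    rw [hAsc, hone, one_smul]

lemma keySL (x y : SL) (hx1 : x ≠ 1) (hx : x ^ 3 = 1) (hy : y ^ 3 = 1)
    (hc : x * y = y * x) : y = 1 ∨ y = x ∨ y = x ^ 2 := by
  have hinj : Function.Injective (fun z : SL => (z : M)) := fun a b h => Subtype.ext h
  set X : M := (x : M) with hX
  set Y : M := (y : M) with hY
  have hXdet : X.det = 1 := x.2
  have hYdet : Y.det = 1 := y.2
  have hX3 : X ^ 3 = 1 := by
    rw [hX, ← Matrix.SpecialLinearGroup.coe_pow, hx, Matrix.SpecialLinearGroup.coe_one]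
  have hY3 : Y ^ 3 = 1 := by
    rw [hY, ← Matrix.SpecialLinearGroup.coe_pow, hy, Matrix.SpecialLinearGroup.coe_one]
  have hcM : X * Y = Y * X := by
    have := congrArg (fun z : SL => (z : M)) hc
    simpa using this
  rcases dich X hXdet hX3 with hXs | hX2
  · exact absurd (hinj hXs) hx1
  rcases dich Y hYdet hY3 with hYs | hY2
  · left; exact hinj hYs
  have hXYdet : (X * Y).det = 1 := by rw [Matrix.det_mul, hXdet, hYdet, one_mul]
  have hco : Commute X Y := hcM
  have hXY3 : (X * Y) ^ 3 = 1 := by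
    rw [hco.mul_pow, hX3, hY3, one_mul]
  rcases dich (X * Y) hXYdet hXY3 with hXYs | hXY2
  · right; right
    have hxy1 : x * y = 1 := by
      apply hinj
      show ((x * y : SL) : M) = ((1 : SL) : M)
      rw [Matrix.SpecialLinearGroup.coe_mul, Matrix.SpecialLinearGroup.coe_one]
      exact hXYs
    have hyi : y = x⁻¹ := (inv_eq_of_mul_eq_one_right hxy1).symm
    have : x⁻¹ = x ^ 2 := by
      rw [inv_eq_iff_mul_eq_one, ← pow_succ']
      exact hx
    rw [hyi, this]
  · right; left
    have expand : (X * Y) * (X * Y) = X * Y + X + Y + 1 := by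
      calc (X * Y) * (X * Y) = X * ((Y * X) * Y) := by noncomm_ring
      _ = X * ((X * Y) * Y) := by rw [← hcM]
      _ = (X * X) * (Y * Y) := by noncomm_ring
      _ = (X + 1) * (Y + 1) := by rw [hX2, hY2]
      _ = X * Y + X + Y + 1 := by noncomm_ring
    rw [expand] at hXY2
    have hsum : X + Y = 0 := by
      linear_combination (norm := abel) hXY2
    have hYX : Y = X := by
      have h1 : Y = -X := eq_neg_of_add_eq_zero_right hsum
      rw [h1, neg_eq_of_add_eq_zero_left (M_two X)]
    exact hinj hYX

/-- Every subgroup of `SL(2,8)` of order 9 is cyclic. -/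
theorem sl2_8_order_nine_subgroup_cyclic
    (H : Subgroup (Matrix.SpecialLinearGroup (Fin 2) (GaloisField 2 3)))
    (hH : Nat.card H = 9) : IsCyclic H := by
  haveI : Finite H := Nat.finite_of_card_ne_zero (by rw [hH]; norm_num)
  haveI : Nontrivial H := Finite.one_lt_card_iff_nontrivial.mp (by rw [hH]; norm_num)
  by_contra hcyc
  have pg : IsPGroup 3 H := IsPGroup.of_card (n := 2) (by rw [hH]; norm_num)
  haveI := pg.center_nontrivial
  obtain ⟨x, hx1⟩ := exists_ne (1 : Subgroup.center H)
  have hcube : ∀ g : H, g ^ 3 = 1 := by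
    intro g
    have hdvd : orderOf g ∣ 3 ^ 2 := by
      have := orderOf_dvd_natCard g
      rwa [hH] at this
    rcases (Nat.dvd_prime_pow Nat.prime_three).mp hdvd with ⟨k, hk, hord⟩
    interval_cases k
    · simp only [pow_zero] at hord
      rw [orderOf_eq_one_iff.mp hord, one_pow]
    · exact orderOf_dvd_iff_pow_eq_one.mp (hord ▸ dvd_refl _)
    · exact absurd (isCyclic_of_orderOf_eq_card g (by rw [hord, hH]; norm_num)) hcyc
  set x0 : H := (x : H) with hx0
  have hx01 : x0 ≠ 1 := fun h => hx1 (Subtype.ext h)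
  have hx03 : x0 ^ 3 = 1 := hcube x0
  refine hcyc ⟨⟨x0, fun y => ?_⟩⟩
  have hy3 : y ^ 3 = 1 := hcube y
  have hcomm : x0 * y = y * x0 := ((Subgroup.mem_center_iff.mp x.2) y).symm
  have hSL : (y : SL) = 1 ∨ (y : SL) = (x0 : SL) ∨ (y : SL) = (x0 : SL) ^ 2 := by
    apply keySL
    · intro h
      exact hx01 (Subtype.ext h)
    · exact_mod_cast congrArg (Subtype.val) hx03
    · exact_mod_cast congrArg (Subtype.val) hy3
    · exact_mod_cast congrArg (Subtype.val) hcomm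
  rcases hSL with h | h | h
  · have hy : y = 1 := Subtype.ext h
    rw [hy]; exact ⟨0, by simp⟩
  · have hy : y = x0 := Subtype.ext h
    rw [hy]; exact ⟨1, by simp⟩
  · have hy : y = x0 ^ 2 := Subtype.ext (by push_cast; exact h)
    rw [hy]; exact ⟨(2:ℕ), zpow_natCast x0 2⟩
end

section
/- The classical unital (Hermitian unital) of order q contains no O'Nan configuration: there do not exist four distinct blocks meeting pairwise in six distinct points. -/
namespace HermitianNoOnan

open Matrix

variable {K : Type} [Field K]

/-- The Hermitian pairing on `Fin 3 → K`. -/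
def herm (q : ℕ) (x y : Fin 3 → K) : K :=
  x 0 * y 0 ^ q + x 1 * y 1 ^ q + x 2 * y 2 ^ q

lemma herm_conj (q : ℕ) (hfa : ∀ a b : K, (a + b) ^ q = a ^ q + b ^ q)
    (hff : ∀ a : K, (a ^ q) ^ q = a) (u v : Fin 3 → K) :
    herm q v u = herm q u v ^ q := by
  simp only [herm, hfa, mul_pow, hff]
  ring

lemma herm_expand (q : ℕ) (hfa : ∀ a b : K, (a + b) ^ q = a ^ q + b ^ q)
    (a b : K) (u v : Fin 3 → K) :
    herm q (a • u + b • v) (a • u + b • v) =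
      a ^ (q + 1) * herm q u u + a * b ^ q * herm q u v
        + a ^ q * b * herm q v u + b ^ (q + 1) * herm q v v := by
  simp only [herm, Pi.add_apply, Pi.smul_apply, smul_eq_mul, hfa, mul_pow, pow_succ]
  ring

/-- If `P.rep` is a scalar multiple of `Q.rep` then `P = Q`. -/
lemma eq_of_rep_smul {P Q : Projectivization K (Fin 3 → K)} {a : K}
    (h : P.rep = a • Q.rep) : P = Q := by
  rw [← P.mk_rep, ← Q.mk_rep]
  exact (Projectivization.mk_eq_mk_iff' K _ _ P.rep_nonzero Q.rep_nonzero).2 ⟨a, h.symm⟩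

/-- Representatives of distinct projective points are linearly independent. -/
lemma pair_indep {P Q : Projectivization K (Fin 3 → K)} (h : P ≠ Q) {a b : K}
    (hab : a • P.rep + b • Q.rep = 0) : a = 0 ∧ b = 0 := by
  by_cases ha : a = 0
  · subst ha
    rw [zero_smul, zero_add] at hab
    rcases smul_eq_zero.1 hab with hb | hb
    · exact ⟨rfl, hb⟩
    · exact absurd hb Q.rep_nonzero
  · exfalso
    apply h
    apply eq_of_rep_smul (a := a⁻¹ * (-b))
    have : a • P.rep = (-b) • Q.rep := by
      rw [neg_smul]
      linear_combination (norm := module) hab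
    calc P.rep = a⁻¹ • (a • P.rep) := by rw [smul_smul, inv_mul_cancel₀ ha, one_smul]
      _ = (a⁻¹ * (-b)) • Q.rep := by rw [this, smul_smul]

lemma span_pair_eq {P Q u v : Fin 3 → K}
    (hu : u ∈ Submodule.span K {P, Q}) (hv : v ∈ Submodule.span K {P, Q})
    (hind : ∀ a b : K, a • u + b • v = 0 → a = 0 ∧ b = 0) :
    Submodule.span K {u, v} = Submodule.span K {P, Q} := by
  obtain ⟨a, b, hu'⟩ := Submodule.mem_span_pair.1 hu
  obtain ⟨c, d, hv'⟩ := Submodule.mem_span_pair.1 hv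
  have keyP : ∀ s t : K, s • u + t • v = (s * a + t * c) • P + (s * b + t * d) • Q := by
    intro s t
    rw [← hu', ← hv']
    module
  have hΔ : a * d - b * c ≠ 0 := by
    intro h0
    have h5 : d • u + (-b) • v = 0 := by
      rw [keyP]
      have e1 : d * a + -b * c = 0 := by linear_combination h0
      have e2 : d * b + -b * d = 0 := by ring
      rw [e1, e2, zero_smul, zero_smul, add_zero]
    obtain ⟨hd0, hb0⟩ := hind _ _ h5
    have hb0' : b = 0 := neg_eq_zero.1 hb0
    have h6 : c • u + (-a) • v = 0 := by
      rw [keyP]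
      have e1 : c * a + -a * c = 0 := by ring
      have e2 : c * b + -a * d = 0 := by rw [hb0', hd0]; ring
      rw [e1, e2, zero_smul, zero_smul, add_zero]
    obtain ⟨hc0, ha0⟩ := hind _ _ h6
    have ha0' : a = 0 := neg_eq_zero.1 ha0
    have hu0 : u = 0 := by rw [← hu', ha0', hb0', zero_smul, zero_smul, add_zero]
    have := (hind 1 0 (by rw [hu0, smul_zero, zero_smul, add_zero])).1
    exact one_ne_zero this
  apply le_antisymm
  · rw [Submodule.span_le, Set.insert_subset_iff, Set.singleton_subset_iff]
    exact ⟨hu, hv⟩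
  · rw [Submodule.span_le, Set.insert_subset_iff, Set.singleton_subset_iff]
    constructor
    · -- P ∈ span {u, v}
      apply Submodule.mem_span_pair.2
      refine ⟨(a * d - b * c)⁻¹ * d, (a * d - b * c)⁻¹ * (-b), ?_⟩
      have h7 : d • u + (-b) • v = (a * d - b * c) • P := by
        rw [keyP]
        have e1 : d * a + -b * c = a * d - b * c := by ring
        have e2 : d * b + -b * d = 0 := by ring
        rw [e1, e2, zero_smul, add_zero]
      calc ((a * d - b * c)⁻¹ * d) • u + ((a * d - b * c)⁻¹ * (-b)) • v
          = (a * d - b * c)⁻¹ • (d • u + (-b) • v) := by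
            rw [smul_add, smul_smul, smul_smul]
        _ = (a * d - b * c)⁻¹ • ((a * d - b * c) • P) := by rw [h7]
        _ = P := by rw [smul_smul, inv_mul_cancel₀ hΔ, one_smul]
    · -- Q ∈ span {u, v}
      apply Submodule.mem_span_pair.2
      refine ⟨(b * c - a * d)⁻¹ * c, (b * c - a * d)⁻¹ * (-a), ?_⟩
      have hΔ' : b * c - a * d ≠ 0 := by
        intro h0; exact hΔ (by linear_combination -h0)
      have h7 : c • u + (-a) • v = (b * c - a * d) • Q := by
        rw [keyP]
        have e1 : c * a + -a * c = 0 := by ring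
        have e2 : c * b + -a * d = b * c - a * d := by ring
        rw [e1, e2, zero_smul, zero_add]
      calc ((b * c - a * d)⁻¹ * c) • u + ((b * c - a * d)⁻¹ * (-a)) • v
          = (b * c - a * d)⁻¹ • (c • u + (-a) • v) := by
            rw [smul_add, smul_smul, smul_smul]
        _ = (b * c - a * d)⁻¹ • ((b * c - a * d) • Q) := by rw [h7]
        _ = Q := by rw [smul_smul, inv_mul_cancel₀ hΔ', one_smul]

/-- Nondegeneracy: the "Gram determinant" of three independent isotropic vectors
is nonzero. -/
lemma herm_nondeg (q : ℕ) (hq0 : q ≠ 0)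
    (hfa : ∀ a b : K, (a + b) ^ q = a ^ q + b ^ q)
    (hff : ∀ a : K, (a ^ q) ^ q = a)
    (u v w : Fin 3 → K)
    (hli : ∀ a b c : K, a • u + b • v + c • w = 0 → a = 0 ∧ b = 0 ∧ c = 0)
    (h00 : herm q u u = 0) (h11 : herm q v v = 0) (h22 : herm q w w = 0) :
    herm q u v * herm q u w ^ q * herm q v w
      + herm q u v ^ q * herm q u w * herm q v w ^ q ≠ 0 := by
  classical
  set φ : K →+* K :=
    { toFun := fun a => a ^ q
      map_one' := one_pow q
      map_mul' := fun a b => mul_pow a b q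
      map_zero' := zero_pow hq0
      map_add' := hfa } with hφdef
  have hφ : ∀ a : K, φ a = a ^ q := fun _ => rfl
  set A : Matrix (Fin 3) (Fin 3) K := Matrix.of ![u, v, w] with hA
  have hdetA : A.det ≠ 0 := by
    intro h
    obtain ⟨g, hg0, hg⟩ := Matrix.exists_vecMul_eq_zero_iff.2 h
    apply hg0
    have hcomp : g 0 • u + g 1 • v + g 2 • w = 0 := by
      funext j
      have := congrFun hg j
      simpa [Matrix.vecMul, dotProduct, Fin.sum_univ_three, hA] using this
    obtain ⟨h0, h1, h2⟩ := hli _ _ _ hcomp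
    funext i
    fin_cases i <;> simp [h0, h1, h2]
  set G : Matrix (Fin 3) (Fin 3) K := A * (A.map φ)ᵀ with hG
  have hGdet : G.det = A.det * A.det ^ q := by
    rw [hG, Matrix.det_mul, Matrix.det_transpose,
      show A.map ⇑φ = φ.mapMatrix A from rfl, ← RingHom.map_det, hφ]
  have hGentry : ∀ i j, G i j = herm q (![u, v, w] i) (![u, v, w] j) := by
    intro i j
    fin_cases i <;> fin_cases j <;>
      simp [hG, hA, Matrix.mul_apply, Matrix.vecMul, dotProduct,
        Fin.sum_univ_three, herm, hφ, Matrix.transpose_apply, Matrix.map_apply]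
  have hdetG : G.det = herm q u v * herm q u w ^ q * herm q v w
      + herm q u v ^ q * herm q u w * herm q v w ^ q := by
    rw [Matrix.det_fin_three]
    have e00 : G 0 0 = 0 := by rw [hGentry]; simpa using h00
    have e11 : G 1 1 = 0 := by rw [hGentry]; simpa using h11
    have e22 : G 2 2 = 0 := by rw [hGentry]; simpa using h22
    have e01 : G 0 1 = herm q u v := by rw [hGentry]; simp
    have e02 : G 0 2 = herm q u w := by rw [hGentry]; simp
    have e12 : G 1 2 = herm q v w := by rw [hGentry]; simp
    have e10 : G 1 0 = herm q u v ^ q := by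
      rw [hGentry]; simpa using herm_conj q hfa hff u v
    have e20 : G 2 0 = herm q u w ^ q := by
      rw [hGentry]; simpa using herm_conj q hfa hff u w
    have e21 : G 2 1 = herm q v w ^ q := by
      rw [hGentry]; simpa using herm_conj q hfa hff v w
    rw [e00, e11, e22, e01, e02, e12, e10, e20, e21]
    ring
  rw [← hdetG, hGdet]
  exact mul_ne_zero hdetA (pow_ne_zero q hdetA)

/-- Key algebraic computation: the O'Nan configuration equations force the
Gram determinant to vanish. -/
lemma key_algebra (q : ℕ) (hq0 : q ≠ 0)
    (hfa : ∀ a b : K, (a + b) ^ q = a ^ q + b ^ q)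
    (hff : ∀ a : K, (a ^ q) ^ q = a)
    (α β γ x1 y1 x2 y2 x3 y3 c d : K)
    (hx1 : x1 ≠ 0) (hy1 : y1 ≠ 0) (hy2 : y2 ≠ 0) (hx3 : x3 ≠ 0) (hy3 : y3 ≠ 0)
    (h1 : x1 * y1 ^ q * α + x1 ^ q * y1 * α ^ q = 0)
    (h2 : x2 * y2 ^ q * β + x2 ^ q * y2 * β ^ q = 0)
    (h3 : x3 * y3 ^ q * γ + x3 ^ q * y3 * γ ^ q = 0)
    (e1 : c * x1 + d * x2 = 0) (e2 : c * y1 = x3) (e3 : d * y2 = y3) :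
    α * β ^ q * γ + α ^ q * β * γ ^ q = 0 := by
  have hneg : ∀ z : K, (-z) ^ q = -(z ^ q) := by
    intro z
    have h := hfa z (-z)
    rw [add_neg_cancel, zero_pow hq0] at h
    linear_combination -h
  have hc : c ≠ 0 := fun h => hx3 (by rw [← e2, h, zero_mul])
  have hd : d ≠ 0 := fun h => hy3 (by rw [← e3, h, zero_mul])
  -- the three "trace-zero" elements
  set A := x1 * y1 ^ q * α with hAdef
  set B := x2 * y2 ^ q * β with hBdef
  set C := x3 * y3 ^ q * γ with hCdef
  have hAq : A ^ q = -A := by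
    have : A ^ q = x1 ^ q * y1 * α ^ q := by rw [hAdef, mul_pow, mul_pow, hff]
    rw [this]; linear_combination h1
  have hBq : B ^ q = -B := by
    have : B ^ q = x2 ^ q * y2 * β ^ q := by rw [hBdef, mul_pow, mul_pow, hff]
    rw [this]; linear_combination h2
  have hCq : C ^ q = -C := by
    have : C ^ q = x3 ^ q * y3 * γ ^ q := by rw [hCdef, mul_pow, mul_pow, hff]
    rw [this]; linear_combination h3
  set M := x1 * x2 ^ q * x3 * y1 ^ q * y2 * y3 ^ q with hMdef
  have claim1 : A * B ^ q * C = M * (α * β ^ q * γ) := by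
    rw [hAdef, hBdef, hCdef, hMdef, mul_pow, mul_pow, hff]
    ring
  have claim2 : A ^ q * B * C ^ q = M ^ q * (α ^ q * β * γ ^ q) := by
    have hMq : M ^ q = x1 ^ q * x2 * x3 ^ q * y1 * y2 ^ q * y3 := by
      rw [hMdef]; rw [mul_pow, mul_pow, mul_pow, mul_pow, mul_pow, hff, hff, hff]
    have hAq' : A ^ q = x1 ^ q * y1 * α ^ q := by rw [hAdef, mul_pow, mul_pow, hff]
    have hCq' : C ^ q = x3 ^ q * y3 * γ ^ q := by rw [hCdef, mul_pow, mul_pow, hff]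
    rw [hMq, hAq', hCq', hBdef]
    ring
  have claim3 : A ^ q * B * C ^ q = -(A * B ^ q * C) := by
    have hB' : B = -(B ^ q) := by rw [hBq, neg_neg]
    rw [hAq, hCq]
    nth_rewrite 1 [hB']
    ring
  -- M = -N where N is fixed by Frobenius and nonzero
  have hx2d : x2 * d = -(c * x1) := by linear_combination e1
  have hMval : M = -((x1 * c) ^ (q + 1) * (y1 * y2) ^ (q + 1)) := by
    have : M = x1 * c * (x2 * d) ^ q * (y1 ^ (q+1)) * (y2 ^ (q+1)) := by
      rw [hMdef, ← e2, ← e3]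
      rw [mul_pow, mul_pow]
      ring
    rw [this, hx2d, hneg, mul_pow]
    ring
  have hMq : M ^ q = M := by
    have hfix : ∀ z : K, (z ^ (q + 1)) ^ q = z ^ (q + 1) := by
      intro z
      rw [pow_succ, mul_pow, hff]
      ring
    rw [hMval, hneg, mul_pow, hfix, hfix]
  have hM0 : M ≠ 0 := by
    rw [hMval]
    exact neg_ne_zero.2 (mul_ne_zero (pow_ne_zero _ (mul_ne_zero hx1 hc))
      (pow_ne_zero _ (mul_ne_zero hy1 hy2)))
  have main : M * (α * β ^ q * γ + α ^ q * β * γ ^ q) = 0 := by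
    have := claim3
    rw [claim1, claim2, hMq] at this
    linear_combination this
  rcases mul_eq_zero.1 main with h | h
  · exact absurd h hM0
  · exact h

end HermitianNoOnan

open HermitianNoOnan in
/-- The Hermitian (classical) unital of order `q` — whose points are the points
of the Hermitian curve `x^{q+1} + y^{q+1} + z^{q+1} = 0` in `PG(2,q²)` and
whose blocks are the intersections of secant lines with the curve — contains
no O'Nan configuration: there are no four distinct blocks meeting pairwise in
six distinct points. -/
theorem hermitian_unital_no_onan (p e : ℕ) (hp : p.Prime) (he : 0 < e)
    (q : ℕ) (hq : q = p ^ e)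
    (K : Type) [Field K] [Fintype K] (hK : Fintype.card K = q ^ 2) :
    ∀ (U : Set (Projectivization K (Fin 3 → K)))
      (Blocks : Set (Set (Projectivization K (Fin 3 → K)))),
      U = {P | P.rep 0 ^ (q + 1) + P.rep 1 ^ (q + 1) + P.rep 2 ^ (q + 1) = 0} →
      Blocks = {b | ∃ P ∈ U, ∃ Q ∈ U, P ≠ Q ∧
        b = {R ∈ U | R.rep ∈ Submodule.span K {P.rep, Q.rep}}} →
      ¬ ∃ b₁ ∈ Blocks, ∃ b₂ ∈ Blocks, ∃ b₃ ∈ Blocks, ∃ b₄ ∈ Blocks,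
        ∃ p₁₂ p₁₃ p₁₄ p₂₃ p₂₄ p₃₄ : Projectivization K (Fin 3 → K),
          b₁ ≠ b₂ ∧ b₁ ≠ b₃ ∧ b₁ ≠ b₄ ∧ b₂ ≠ b₃ ∧ b₂ ≠ b₄ ∧ b₃ ≠ b₄ ∧
          p₁₂ ≠ p₁₃ ∧ p₁₂ ≠ p₁₄ ∧ p₁₂ ≠ p₂₃ ∧ p₁₂ ≠ p₂₄ ∧ p₁₂ ≠ p₃₄ ∧
          p₁₃ ≠ p₁₄ ∧ p₁₃ ≠ p₂₃ ∧ p₁₃ ≠ p₂₄ ∧ p₁₃ ≠ p₃₄ ∧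
          p₁₄ ≠ p₂₃ ∧ p₁₄ ≠ p₂₄ ∧ p₁₄ ≠ p₃₄ ∧
          p₂₃ ≠ p₂₄ ∧ p₂₃ ≠ p₃₄ ∧ p₂₄ ≠ p₃₄ ∧
          p₁₂ ∈ b₁ ∧ p₁₂ ∈ b₂ ∧ p₁₃ ∈ b₁ ∧ p₁₃ ∈ b₃ ∧ p₁₄ ∈ b₁ ∧ p₁₄ ∈ b₄ ∧
          p₂₃ ∈ b₂ ∧ p₂₃ ∈ b₃ ∧ p₂₄ ∈ b₂ ∧ p₂₄ ∈ b₄ ∧ p₃₄ ∈ b₃ ∧ p₃₄ ∈ b₄ := by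
  intro U Blocks hU hBlocks
  -- basic numerics
  have hq0 : q ≠ 0 := by rw [hq]; exact pow_ne_zero e hp.pos.ne'
  -- Frobenius facts
  have hff : ∀ a : K, (a ^ q) ^ q = a := by
    intro a
    rw [← pow_mul, ← sq, ← hK]
    exact FiniteField.pow_card a
  have hcharK : CharP K p := by
    obtain ⟨p', hp'⟩ := CharP.exists K
    have hp'prime : p'.Prime := CharP.char_is_prime K p'
    have hdvd : p' ∣ Fintype.card K :=
      (CharP.cast_eq_zero_iff K p' _).1 (FiniteField.cast_card_eq_zero K)
    rw [hK, hq, ← pow_mul] at hdvd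
    have : p' ∣ p := hp'prime.dvd_of_dvd_pow hdvd
    have : p' = p := ((Nat.prime_dvd_prime_iff_eq hp'prime hp).1 this)
    rwa [← this]
  haveI : Fact p.Prime := ⟨hp⟩
  have hfa : ∀ a b : K, (a + b) ^ q = a ^ q + b ^ q := by
    intro a b
    rw [hq]
    exact add_pow_char_pow ..
  -- isotropy of points of U
  have hiso : ∀ R : Projectivization K (Fin 3 → K), R ∈ U → herm q R.rep R.rep = 0 := by
    intro R hR
    rw [hU] at hR
    have : R.rep 0 ^ (q+1) + R.rep 1 ^ (q+1) + R.rep 2 ^ (q+1) = 0 := hR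
    simp only [herm, pow_succ] at this ⊢
    linear_combination this
  rintro ⟨b₁, hb₁, b₂, hb₂, b₃, hb₃, b₄, hb₄, p12, p13, p14, p23, p24, p34,
    hb12, -, -, -, -, -,
    h1213, h1214, h1223, h1224, -,
    h1314, h1323, -, h1334,
    h1423, h1424, -,
    h2324, h2334, -,
    m12b1, m12b2, m13b1, m13b3, m14b1, m14b4,
    m23b2, m23b3, m24b2, m24b4, m34b3, m34b4⟩
  rw [hBlocks] at hb₁ hb₂ hb₃ hb₄
  obtain ⟨P1, -, Q1, -, -, rfl⟩ := hb₁
  obtain ⟨P2, -, Q2, -, -, rfl⟩ := hb₂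
  obtain ⟨P3, -, Q3, -, -, rfl⟩ := hb₃
  obtain ⟨P4, -, Q4, -, -, rfl⟩ := hb₄
  simp only [Set.mem_setOf_eq] at m12b1 m12b2 m13b1 m13b3 m14b1 m14b4 m23b2 m23b3 m24b2 m24b4 m34b3 m34b4
  set r12 := p12.rep
  set r13 := p13.rep
  set r14 := p14.rep
  set r23 := p23.rep
  set r24 := p24.rep
  set r34 := p34.rep
  -- the four lines as spans of configuration points
  have hW1 : Submodule.span K {r12, r13} = Submodule.span K {P1.rep, Q1.rep} :=
    span_pair_eq m12b1.2 m13b1.2 (fun a b h => pair_indep h1213 h)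
  have hW2 : Submodule.span K {r12, r23} = Submodule.span K {P2.rep, Q2.rep} :=
    span_pair_eq m12b2.2 m23b2.2 (fun a b h => pair_indep h1223 h)
  have hW3 : Submodule.span K {r13, r23} = Submodule.span K {P3.rep, Q3.rep} :=
    span_pair_eq m13b3.2 m23b3.2 (fun a b h => pair_indep h1323 h)
  have hW4 : Submodule.span K {r14, r24} = Submodule.span K {P4.rep, Q4.rep} :=
    span_pair_eq m14b4.2 m24b4.2 (fun a b h => pair_indep h1424 h)
  -- the triangle is nondegenerate
  have htrip : ∀ a b c : K, a • r12 + b • r13 + c • r23 = 0 → a = 0 ∧ b = 0 ∧ c = 0 := by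
    intro a b c habc
    by_cases hc : c = 0
    · subst hc
      rw [zero_smul, add_zero] at habc
      obtain ⟨ha, hb⟩ := pair_indep h1213 habc
      exact ⟨ha, hb, rfl⟩
    · exfalso
      have h23mem : r23 ∈ Submodule.span K {r12, r13} := by
        apply Submodule.mem_span_pair.2
        refine ⟨-(a/c), -(b/c), ?_⟩
        have : r23 = c⁻¹ • (c • r23) := by
          rw [smul_smul, inv_mul_cancel₀ hc, one_smul]
        rw [this]
        have hc23 : c • r23 = (-a) • r12 + (-b) • r13 := by
          linear_combination (norm := module) habc
        rw [hc23, smul_add, smul_smul, smul_smul]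
        rw [div_eq_mul_inv, div_eq_mul_inv]
        ring_nf
      have hspan : Submodule.span K {r12, r23} = Submodule.span K {r12, r13} := by
        apply span_pair_eq
        · exact Submodule.subset_span (by simp)
        · exact h23mem
        · exact fun a b h => pair_indep h1223 h
      apply hb12
      have : Submodule.span K ({P1.rep, Q1.rep} : Set (Fin 3 → K))
          = Submodule.span K {P2.rep, Q2.rep} := by
        rw [← hW1, ← hW2, hspan]
      rw [this]
  -- decompositions of the feet
  have h14W : r14 ∈ Submodule.span K {r12, r13} := by rw [hW1]; exact m14b1.2
  have h24W : r24 ∈ Submodule.span K {r12, r23} := by rw [hW2]; exact m24b2.2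
  have h34W : r34 ∈ Submodule.span K {r13, r23} := by rw [hW3]; exact m34b3.2
  have h34W4 : r34 ∈ Submodule.span K {r14, r24} := by rw [hW4]; exact m34b4.2
  obtain ⟨x1, y1, h14⟩ := Submodule.mem_span_pair.1 h14W
  obtain ⟨x2, y2, h24⟩ := Submodule.mem_span_pair.1 h24W
  obtain ⟨x3, y3, h34⟩ := Submodule.mem_span_pair.1 h34W
  obtain ⟨c, d, h34'⟩ := Submodule.mem_span_pair.1 h34W4
  -- all decomposition coefficients are nonzero
  have hx1 : x1 ≠ 0 := by
    intro h
    rw [h, zero_smul, zero_add] at h14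
    exact h1314 (eq_of_rep_smul h14.symm).symm
  have hy1 : y1 ≠ 0 := by
    intro h
    rw [h, zero_smul, add_zero] at h14
    exact h1214 (eq_of_rep_smul h14.symm).symm
  have hx2 : x2 ≠ 0 := by
    intro h
    rw [h, zero_smul, zero_add] at h24
    exact h2324 (eq_of_rep_smul h24.symm).symm
  have hy2 : y2 ≠ 0 := by
    intro h
    rw [h, zero_smul, add_zero] at h24
    exact h1224 (eq_of_rep_smul h24.symm).symm
  have hx3 : x3 ≠ 0 := by
    intro h
    rw [h, zero_smul, zero_add] at h34
    exact h2334 (eq_of_rep_smul h34.symm).symm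
  have hy3 : y3 ≠ 0 := by
    intro h
    rw [h, zero_smul, add_zero] at h34
    exact h1334 (eq_of_rep_smul h34.symm).symm
  -- coefficient matching
  have hmatch : (c * x1 + d * x2) • r12 + (c * y1 - x3) • r13 + (d * y2 - y3) • r23 = 0 := by
    have expand : (c * x1 + d * x2) • r12 + (c * y1 - x3) • r13 + (d * y2 - y3) • r23
        = (c • r14 + d • r24) - r34 := by
      rw [← h14, ← h24, ← h34]
      module
    rw [expand, h34', sub_self]
  obtain ⟨e1, e2, e3⟩ := htrip _ _ _ hmatch
  have e2' : c * y1 = x3 := by linear_combination e2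
  have e3' : d * y2 = y3 := by linear_combination e3
  -- absoluteness conditions
  set α := herm q r12 r13 with hα
  set β := herm q r12 r23 with hβ
  set γ := herm q r13 r23 with hγ
  have hd12 : herm q r12 r12 = 0 := hiso p12 m12b1.1
  have hd13 : herm q r13 r13 = 0 := hiso p13 m13b1.1
  have hd23 : herm q r23 r23 = 0 := hiso p23 m23b2.1
  have habs : ∀ (x y : K) (u v : Fin 3 → K) (r : Fin 3 → K), x • u + y • v = r →
      herm q r r = 0 → herm q u u = 0 → herm q v v = 0 →
      x * y ^ q * herm q u v + x ^ q * y * herm q v u = 0 := by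
    intro x y u v r hr h0 huu hvv
    have := herm_expand q hfa x y u v
    rw [hr, h0, huu, hvv] at this
    linear_combination -this
  have h1 : x1 * y1 ^ q * α + x1 ^ q * y1 * α ^ q = 0 := by
    have := habs x1 y1 r12 r13 r14 h14 (hiso p14 m14b1.1) hd12 hd13
    rwa [herm_conj q hfa hff r12 r13, ← hα] at this
  have h2 : x2 * y2 ^ q * β + x2 ^ q * y2 * β ^ q = 0 := by
    have := habs x2 y2 r12 r23 r24 h24 (hiso p24 m24b2.1) hd12 hd23
    rwa [herm_conj q hfa hff r12 r23, ← hβ] at this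
  have h3 : x3 * y3 ^ q * γ + x3 ^ q * y3 * γ ^ q = 0 := by
    have := habs x3 y3 r13 r23 r34 h34 (hiso p34 m34b3.1) hd13 hd23
    rwa [herm_conj q hfa hff r13 r23, ← hγ] at this
  -- the contradiction
  have hnondeg := herm_nondeg q hq0 hfa hff r12 r13 r23 htrip hd12 hd13 hd23
  exact hnondeg (key_algebra q hq0 hfa hff α β γ x1 y1 x2 y2 x3 y3 c d
    hx1 hy1 hy2 hx3 hy3 h1 h2 h3 e1 e2' e3')
end
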